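/- Let k ≥ 0 and m > k be integers, let μ be a probability measure on ℝ with μ([0,k]) = 1, and let f : [0,1] → ℝ be continuous. Then for every x ∈ [0,1], |L_{m,k}(f;x) − f(x)| ≤ 2k·ω(f; 1/m) + (3/2)·ω₂(f; σ(x)/√m). -/

import Mathlib

open Set Finset MeasureTheory

/-- Bernstein basis polynomial `p_{m,k}(x) = C(m,k) x^k (1-x)^{m-k}`. -/
noncomputable def bern (m k : ℕ) (x : ℝ) : ℝ :=
  (m.choose k : ℝ) * x ^ k * (1 - x) ^ (m - k)

/-- `σ(x) = √(x(1-x))`. -/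
noncomputable def sigm (x : ℝ) : ℝ := Real.sqrt (x * (1 - x))

/-- The first modulus of continuity of `f` on `[0,1]`. -/
noncomputable def omega1 (f : ℝ → ℝ) (δ : ℝ) : ℝ :=
  sSup {v | ∃ x y : ℝ, x ∈ Set.Icc (0:ℝ) 1 ∧ y ∈ Set.Icc (0:ℝ) 1 ∧ |x - y| ≤ δ ∧
    v = |f x - f y|}

/-- The second modulus of continuity of `f` on `[0,1]`. -/
noncomputable def omega2 (f : ℝ → ℝ) (δ : ℝ) : ℝ :=
  sSup {v | ∃ x h : ℝ, 0 ≤ h ∧ h ≤ δ ∧ x - h ∈ Set.Icc (0:ℝ) 1 ∧ x + h ∈ Set.Icc (0:ℝ) 1 ∧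
    v = |f (x + h) - 2 * f x + f (x - h)|}

/-- Bernstein–Kantorovich type operator
`L_{m,k}(f;x) = Σ_{l=0}^{m-k} p_{m-k,l}(x) ∫ f((l+t)/m) dμ(t)`. -/
noncomputable def Lop (m k : ℕ) (μ : Measure ℝ) (f : ℝ → ℝ) (x : ℝ) : ℝ :=
  ∑ l ∈ Finset.range (m - k + 1), bern (m - k) l x * ∫ t, f (((l : ℝ) + t) / m) ∂μ


section moduli

variable {f : ℝ → ℝ} {C : ℝ}

lemma omega1_bdd (hC : ∀ x ∈ Set.Icc (0:ℝ) 1, |f x| ≤ C) (δ : ℝ) :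
    BddAbove {v | ∃ x y : ℝ, x ∈ Set.Icc (0:ℝ) 1 ∧ y ∈ Set.Icc (0:ℝ) 1 ∧ |x - y| ≤ δ ∧
    v = |f x - f y|} := by
  refine ⟨2 * C, ?_⟩
  rintro v ⟨x, y, hx, hy, -, rfl⟩
  calc |f x - f y| ≤ |f x| + |f y| := abs_sub _ _
    _ ≤ C + C := add_le_add (hC x hx) (hC y hy)
    _ = 2 * C := by ring

lemma omega1_le_pt (hC : ∀ x ∈ Set.Icc (0:ℝ) 1, |f x| ≤ C) {δ x y : ℝ}
    (hx : x ∈ Set.Icc (0:ℝ) 1) (hy : y ∈ Set.Icc (0:ℝ) 1) (hxy : |x - y| ≤ δ) :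
    |f x - f y| ≤ omega1 f δ :=
  le_csSup (omega1_bdd hC δ) ⟨x, y, hx, hy, hxy, rfl⟩

lemma omega1_nonneg (hC : ∀ x ∈ Set.Icc (0:ℝ) 1, |f x| ≤ C) {δ : ℝ} (hδ : 0 ≤ δ) :
    0 ≤ omega1 f δ := by
  have := omega1_le_pt hC (δ := δ) (x := 0) (y := 0)
    (by simp) (by simp) (by simpa using hδ)
  simpa using this.trans_eq' (by simp)

/-- chaining: if `|x - y| ≤ j * δ` then `|f x - f y| ≤ j * omega1 f δ`. -/
lemma omega1_chain (hC : ∀ x ∈ Set.Icc (0:ℝ) 1, |f x| ≤ C) {δ : ℝ} (hδ : 0 ≤ δ) :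
    ∀ (j : ℕ) (x y : ℝ), x ∈ Set.Icc (0:ℝ) 1 → y ∈ Set.Icc (0:ℝ) 1 →
      |x - y| ≤ j * δ → |f x - f y| ≤ j * omega1 f δ := by
  intro j
  induction j with
  | zero =>
    intro x y hx hy hxy
    simp only [Nat.cast_zero, zero_mul] at hxy ⊢
    have : x = y := by
      have := abs_nonneg (x - y)
      have : |x - y| = 0 := le_antisymm hxy this
      linarith [abs_eq_zero.mp this, sub_eq_zero.mp (abs_eq_zero.mp this)]
    simp [this]
  | succ j ih =>
    -- wlog y ≤ x
    have main : ∀ x y : ℝ, x ∈ Set.Icc (0:ℝ) 1 → y ∈ Set.Icc (0:ℝ) 1 → y ≤ x →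
        x - y ≤ (j + 1 : ℕ) * δ → |f x - f y| ≤ (j + 1 : ℕ) * omega1 f δ := by
      intro x y hx hy hyx hxy
      set z := max y (x - δ) with hz
      have hzy : y ≤ z := le_max_left _ _
      have hzx : z ≤ x := max_le hyx (by linarith)
      have hzmem : z ∈ Set.Icc (0:ℝ) 1 := ⟨le_trans hy.1 hzy, le_trans hzx hx.2⟩
      have h1 : |x - z| ≤ δ := by
        rw [abs_of_nonneg (by linarith)]
        have : x - δ ≤ z := le_max_right _ _
        linarith
      have h2 : |z - y| ≤ j * δ := by
        rw [abs_of_nonneg (by linarith)]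
        rcases max_cases y (x - δ) with ⟨h, -⟩ | ⟨h, -⟩
        · rw [hz, h]; simp; positivity
        · rw [hz, h]
          push_cast at hxy ⊢
          linarith
      calc |f x - f y| ≤ |f x - f z| + |f z - f y| := abs_sub_le _ _ _
        _ ≤ omega1 f δ + j * omega1 f δ :=
            add_le_add (omega1_le_pt hC hx hzmem h1) (ih z y hzmem hy h2)
        _ = (j + 1 : ℕ) * omega1 f δ := by push_cast; ring
    intro x y hx hy hxy
    rcases le_total y x with h | h
    · exact main x y hx hy h (by rwa [abs_of_nonneg (by linarith)] at hxy)
    · rw [abs_sub_comm] at hxy ⊢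
      exact main y x hy hx h (by rwa [abs_of_nonneg (by linarith)] at hxy)

lemma omega2_bdd (hC : ∀ x ∈ Set.Icc (0:ℝ) 1, |f x| ≤ C) (δ : ℝ) :
    BddAbove {v | ∃ x h : ℝ, 0 ≤ h ∧ h ≤ δ ∧ x - h ∈ Set.Icc (0:ℝ) 1 ∧ x + h ∈ Set.Icc (0:ℝ) 1 ∧
    v = |f (x + h) - 2 * f x + f (x - h)|} := by
  refine ⟨4 * C, ?_⟩
  rintro v ⟨x, h, h0, -, hm, hp, rfl⟩
  have hxm : x ∈ Set.Icc (0:ℝ) 1 := ⟨by linarith [hm.1], by linarith [hp.2]⟩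
  calc |f (x + h) - 2 * f x + f (x - h)| ≤ |f (x + h) - 2 * f x| + |f (x - h)| := abs_add_le _ _
    _ ≤ (|f (x + h)| + |2 * f x|) + |f (x - h)| := by gcongr; exact abs_sub _ _
    _ ≤ (C + 2 * C) + C := by
        have := hC _ hp; have := hC _ hm; have := hC _ hxm
        rw [abs_mul]
        gcongr <;> simp [abs_of_nonneg, *]
    _ = 4 * C := by ring

lemma omega2_le_pt (hC : ∀ x ∈ Set.Icc (0:ℝ) 1, |f x| ≤ C) {δ x h : ℝ}
    (h0 : 0 ≤ h) (hδ : h ≤ δ) (hm : x - h ∈ Set.Icc (0:ℝ) 1) (hp : x + h ∈ Set.Icc (0:ℝ) 1) :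
    |f (x + h) - 2 * f x + f (x - h)| ≤ omega2 f δ :=
  le_csSup (omega2_bdd hC δ) ⟨x, h, h0, hδ, hm, hp, rfl⟩

lemma omega2_nonneg (hC : ∀ x ∈ Set.Icc (0:ℝ) 1, |f x| ≤ C) {δ : ℝ} (hδ : 0 ≤ δ) :
    0 ≤ omega2 f δ := by
  have := omega2_le_pt hC (δ := δ) (x := 0) (h := 0) le_rfl hδ (by simp) (by simp)
  calc (0:ℝ) = |f (0 + 0) - 2 * f 0 + f (0 - 0)| := by
        norm_num
        rw [show f 0 - 2 * f 0 + f 0 = 0 by ring, abs_zero]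
    _ ≤ _ := this

lemma omega2_neg (f : ℝ → ℝ) (δ : ℝ) : omega2 (fun t => -f t) δ = omega2 f δ := by
  unfold omega2
  congr 1
  ext v
  constructor
  · rintro ⟨x, h, h0, hδ, hm, hp, rfl⟩
    exact ⟨x, h, h0, hδ, hm, hp, by rw [← abs_neg]; ring_nf⟩
  · rintro ⟨x, h, h0, hδ, hm, hp, rfl⟩
    exact ⟨x, h, h0, hδ, hm, hp, by rw [← abs_neg]; ring_nf⟩

end moduli

/-- interpolation remainder -/
noncomputable def lag (f : ℝ → ℝ) (a b t : ℝ) : ℝ :=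
  f t - f a - (t - a) * ((f b - f a) / (b - a))

/-- quadratic barrier -/
noncomputable def bar (a b w c2 t : ℝ) : ℝ := w + (t - a) * (b - t) * c2

/-- One-sided interpolation error estimate via a maximum principle. -/
lemma interp_upper {f : ℝ → ℝ} {C : ℝ} (hf : ContinuousOn f (Set.Icc 0 1))
    (hC : ∀ x ∈ Set.Icc (0:ℝ) 1, |f x| ≤ C) {h a b : ℝ} (hh : 0 < h)
    (ha : 0 ≤ a) (hab : a < b) (hb : b ≤ 1) :
    ∀ c ∈ Set.Icc a b,
      f c - (f a + (c - a) * (f b - f a) / (b - a)) ≤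
        (1 + (c - a) * (b - c) / (2 * h ^ 2)) * omega2 f h := by
  set ω := omega2 f h with hωdef
  have hω : 0 ≤ ω := omega2_nonneg hC hh.le
  have hba : (0:ℝ) < b - a := by linarith
  set c2 : ℝ := ω / (2 * h ^ 2) with hc2
  have hc2n : 0 ≤ c2 := by rw [hc2]; positivity
  have hsub : Set.Icc a b ⊆ Set.Icc (0:ℝ) 1 := Set.Icc_subset_Icc ha hb
  have hFa : lag f a b a = 0 := by simp [lag]
  have hFb : lag f a b b = 0 := by rw [lag]; field_simp; ring
  have hBa : bar a b ω c2 a = ω := by simp [bar]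
  have hBb : bar a b ω c2 b = ω := by simp [bar]
  -- second difference estimate for lag
  have hsecond : ∀ t r : ℝ, 0 ≤ r → r ≤ h → a ≤ t - r → t + r ≤ b →
      lag f a b t ≤ (lag f a b (t - r) + lag f a b (t + r)) / 2 + ω / 2 := by
    intro t r hr0 hrh htr1 htr2
    have habs : |f (t + r) - 2 * f t + f (t - r)| ≤ ω := by
      apply omega2_le_pt hC hr0 hrh
      · exact hsub ⟨htr1, by linarith⟩
      · exact hsub ⟨by linarith, htr2⟩
    have hlin : lag f a b (t - r) + lag f a b (t + r) - 2 * lag f a b t =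
        f (t + r) - 2 * f t + f (t - r) := by
      simp only [lag]; ring
    rcases abs_le.mp habs with ⟨hl, hr2⟩
    linarith
  -- barrier second difference identity
  have hBiden : ∀ t r : ℝ, bar a b ω c2 (t - r) + bar a b ω c2 (t + r) - 2 * bar a b ω c2 t =
      -(2 * r ^ 2 * c2) := by
    intro t r; simp only [bar]; ring
  -- maximum of lag - bar on [a,b]
  have hcont : ContinuousOn (fun t => lag f a b t - bar a b ω c2 t) (Set.Icc a b) := by
    simp only [lag, bar]
    apply ContinuousOn.sub
    · exact ((hf.mono hsub).sub continuousOn_const).sub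
        (Continuous.continuousOn ((continuous_id.sub continuous_const).mul continuous_const))
    · exact Continuous.continuousOn (by
        exact continuous_const.add
          (((continuous_id.sub continuous_const).mul
            (continuous_const.sub continuous_id)).mul continuous_const))
  obtain ⟨t0, ht0mem, ht0max⟩ :=
    isCompact_Icc.exists_isMaxOn ⟨a, Set.left_mem_Icc.mpr hab.le⟩ hcont
  set S := lag f a b t0 - bar a b ω c2 t0 with hSdef
  have hmax : ∀ t ∈ Set.Icc a b, lag f a b t - bar a b ω c2 t ≤ S := fun t ht => ht0max ht
  suffices hS : S ≤ 0 by
    intro c hc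
    have h1 := hmax c hc
    have h2 : lag f a b c ≤ bar a b ω c2 c := by linarith
    calc f c - (f a + (c - a) * (f b - f a) / (b - a)) = lag f a b c := by rw [lag]; ring
      _ ≤ bar a b ω c2 c := h2
      _ = (1 + (c - a) * (b - c) / (2 * h ^ 2)) * ω := by rw [bar, hc2]; ring
  by_contra hS
  push_neg at hS
  have key : ∀ N : ℕ, ∀ t, t ∈ Set.Icc a b →
      lag f a b t - bar a b ω c2 t = S → b - t ≤ N * h → False := by
    intro N
    induction N with
    | zero =>
      intro t ht hts htb
      have htb' : t = b := le_antisymm ht.2 (by simpa using htb)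
      rw [htb', hFb, hBb] at hts
      linarith
    | succ N ih =>
      intro t ht hts htb
      rcases eq_or_lt_of_le ht.1 with h1 | h1
      · rw [← h1, hFa, hBa] at hts; linarith
      rcases eq_or_lt_of_le ht.2 with h2 | h2
      · rw [h2, hFb, hBb] at hts; linarith
      by_cases hcase : min (t - a) (b - t) ≤ h
      · -- halving case: reflection hits an endpoint
        set r := min (t - a) (b - t) with hr
        have hr0 : 0 < r := lt_min (by linarith) (by linarith)
        have htr1 : a ≤ t - r := by
          have := min_le_left (t - a) (b - t); rw [← hr] at this; linarith
        have htr2 : t + r ≤ b := by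
          have := min_le_right (t - a) (b - t); rw [← hr] at this; linarith
        have h2nd := hsecond t r hr0.le hcase htr1 htr2
        have hBi := hBiden t r
        have hmaxm := hmax (t - r) ⟨htr1, by linarith⟩
        have hmaxp := hmax (t + r) ⟨by linarith, htr2⟩
        have hA : (0:ℝ) ≤ 2 * r ^ 2 * c2 := by positivity
        rcases min_cases (t - a) (b - t) with ⟨he, -⟩ | ⟨he, -⟩
        · -- r = t - a, so t - r = a
          have hta : t - r = a := by rw [hr, he]; ring
          rw [hta, hFa] at h2nd
          rw [hta, hBa] at hBi
          linarith
        · -- r = b - t, so t + r = b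
          have htb2 : t + r = b := by rw [hr, he]; ring
          rw [htb2, hFb] at h2nd
          rw [htb2, hBb] at hBi
          linarith
      · -- interior case: propagate the maximum to the right
        push_neg at hcase
        rcases lt_min_iff.mp hcase with ⟨hca, hcb⟩
        have h2nd := hsecond t h hh.le le_rfl (by linarith) (by linarith)
        have hBi := hBiden t h
        have hhh : 2 * h ^ 2 * c2 = ω := by rw [hc2]; field_simp
        rw [hhh] at hBi
        have hmaxm := hmax (t - h) ⟨by linarith, by linarith⟩
        have hmemp : t + h ∈ Set.Icc a b := ⟨by linarith, by linarith⟩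
        have hmaxp := hmax (t + h) hmemp
        have hGp : lag f a b (t + h) - bar a b ω c2 (t + h) = S :=
          le_antisymm hmaxp (by linarith)
        refine ih (t + h) hmemp hGp ?_
        push_cast at htb
        linarith
  obtain ⟨N, hN⟩ := exists_nat_ge ((b - t0) / h)
  exact key N t0 ht0mem rfl (by rw [div_le_iff₀ hh] at hN; linarith)

lemma two_point {f : ℝ → ℝ} {C : ℝ} (hf : ContinuousOn f (Set.Icc 0 1))
    (hC : ∀ x ∈ Set.Icc (0:ℝ) 1, |f x| ≤ C) {h α β a c b : ℝ} (hh : 0 < h)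
    (hα : 0 ≤ α) (hβ : 0 ≤ β) (ha : 0 ≤ a) (hac : a ≤ c) (hcb : c ≤ b) (hb : b ≤ 1)
    (hbal : α * (c - a) = β * (b - c)) :
    |α * (f a - f c) + β * (f b - f c)| ≤
      (α * (1 + (a - c) ^ 2 / (2 * h ^ 2)) + β * (1 + (b - c) ^ 2 / (2 * h ^ 2))) * omega2 f h := by
  have hω : 0 ≤ omega2 f h := omega2_nonneg hC hh.le
  have hco : 0 ≤ α * (1 + (a - c) ^ 2 / (2 * h ^ 2)) + β * (1 + (b - c) ^ 2 / (2 * h ^ 2)) := by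
    have h1 : (0:ℝ) ≤ 1 + (a - c) ^ 2 / (2 * h ^ 2) := by positivity
    have h2 : (0:ℝ) ≤ 1 + (b - c) ^ 2 / (2 * h ^ 2) := by positivity
    nlinarith
  by_cases hdeg : α * (c - a) = 0
  · have hdeg' : β * (b - c) = 0 := by rw [← hbal]; exact hdeg
    have e1 : α * (f a - f c) = 0 := by
      rcases mul_eq_zero.mp hdeg with h0 | h0
      · rw [h0, zero_mul]
      · have : a = c := by linarith
        rw [this, sub_self, mul_zero]
    have e2 : β * (f b - f c) = 0 := by
      rcases mul_eq_zero.mp hdeg' with h0 | h0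
      · rw [h0, zero_mul]
      · have : b = c := by linarith
        rw [this, sub_self, mul_zero]
    rw [e1, e2, add_zero, abs_zero]
    exact mul_nonneg hco hω
  · have hK : 0 < α * (c - a) :=
      lt_of_le_of_ne (mul_nonneg hα (by linarith)) (Ne.symm hdeg)
    have hα' : 0 < α := by
      rcases hα.lt_or_eq with h0 | h0; · exact h0
      · exfalso; rw [← h0] at hK; simp at hK
    have hca : 0 < c - a := by nlinarith
    have hK' : 0 < β * (b - c) := hbal ▸ hK
    have hβ' : 0 < β := by
      rcases hβ.lt_or_eq with h0 | h0; · exact h0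
      · exfalso; rw [← h0] at hK'; simp at hK'
    have hbc : 0 < b - c := by nlinarith
    have hab : a < b := by linarith
    have hba : b - a ≠ 0 := by intro hz; linarith [hz]
    -- two-sided interpolation bound
    have h1 := interp_upper hf hC hh ha hab hb c ⟨hac, hcb⟩
    have hCneg : ∀ x ∈ Set.Icc (0:ℝ) 1, |(fun t => -f t) x| ≤ C := by
      intro x hx; simpa using hC x hx
    have h2 := interp_upper (f := fun t => -f t) (hf.neg) hCneg hh ha hab hb c ⟨hac, hcb⟩
    rw [omega2_neg] at h2
    have habs : |f c - (f a + (c - a) * (f b - f a) / (b - a))| ≤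
        (1 + (c - a) * (b - c) / (2 * h ^ 2)) * omega2 f h := by
      rw [abs_le]
      constructor
      · 
        have : -(f c - (f a + (c - a) * (f b - f a) / (b - a))) ≤
            (1 + (c - a) * (b - c) / (2 * h ^ 2)) * omega2 f h := by
          calc -(f c - (f a + (c - a) * (f b - f a) / (b - a)))
              = -f c - (-f a + (c - a) * (-f b - -f a) / (b - a)) := by ring
            _ ≤ _ := h2
        linarith
      · exact h1
    -- rewrite the pair functional as a multiple of the interpolation error
    have hE : α * (f a - f c) + β * (f b - f c) =
        -((α + β) * (f c - (f a + (c - a) * (f b - f a) / (b - a)))) := by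
      field_simp
      linear_combination (f a - f b) * hbal
    rw [hE, abs_neg, abs_mul, abs_of_nonneg (by linarith : (0:ℝ) ≤ α + β)]
    have hcoid : (α + β) * (1 + (c - a) * (b - c) / (2 * h ^ 2)) =
        α * (1 + (a - c) ^ 2 / (2 * h ^ 2)) + β * (1 + (b - c) ^ 2 / (2 * h ^ 2)) := by
      field_simp
      linear_combination (b + a - 2 * c) * hbal
    calc (α + β) * |f c - (f a + (c - a) * (f b - f a) / (b - a))|
        ≤ (α + β) * ((1 + (c - a) * (b - c) / (2 * h ^ 2)) * omega2 f h) := by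
          apply mul_le_mul_of_nonneg_left habs (by linarith)
      _ = _ := by rw [← mul_assoc, hcoid]

lemma sum_surgery (s : Finset ℕ) {i j : ℕ} (hi : i ∈ s) (hj : j ∈ s) (hij : i ≠ j)
    (w g : ℕ → ℝ) (β : ℝ) :
    ∑ x ∈ s, w x * g x =
      w i * g i + β * g j + ∑ x ∈ s.erase i, Function.update w j (w j - β) x * g x := by
  have hjs : j ∈ s.erase i := Finset.mem_erase.mpr ⟨fun hji => hij hji.symm, hj⟩
  have h1 : ∑ x ∈ s, w x * g x = w i * g i + ∑ x ∈ s.erase i, w x * g x :=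
    (Finset.add_sum_erase s _ hi).symm
  have h2 : ∑ x ∈ s.erase i, (w x * g x - Function.update w j (w j - β) x * g x) = β * g j := by
    have hcg : ∀ x ∈ s.erase i,
        w x * g x - Function.update w j (w j - β) x * g x =
          if x = j then β * g x else 0 := by
      intro x hx
      by_cases hxj : x = j
      · subst hxj
        rw [Function.update_self, if_pos rfl]
        ring
      · rw [Function.update_of_ne hxj, if_neg hxj, sub_self]
    rw [Finset.sum_congr rfl hcg, Finset.sum_ite_eq' (s.erase i) j (fun x => β * g x),
      if_pos hjs]
  rw [Finset.sum_sub_distrib] at h2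
  linarith

lemma disc {f : ℝ → ℝ} {C : ℝ} (hf : ContinuousOn f (Set.Icc 0 1))
    (hC : ∀ x ∈ Set.Icc (0:ℝ) 1, |f x| ≤ C) {h c : ℝ} (hh : 0 < h)
    (hc : c ∈ Set.Icc (0:ℝ) 1) :
    ∀ (s : Finset ℕ) (w y : ℕ → ℝ), (∀ i ∈ s, 0 ≤ w i) → (∀ i ∈ s, y i ∈ Set.Icc (0:ℝ) 1) →
      (∑ i ∈ s, w i * (y i - c) = 0) →
      |∑ i ∈ s, w i * (f (y i) - f c)| ≤
        (∑ i ∈ s, w i * (1 + (y i - c) ^ 2 / (2 * h ^ 2))) * omega2 f h := by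
  have hω : 0 ≤ omega2 f h := omega2_nonneg hC hh.le
  suffices H : ∀ n (s : Finset ℕ), s.card ≤ n → ∀ w y : ℕ → ℝ,
      (∀ i ∈ s, 0 ≤ w i) → (∀ i ∈ s, y i ∈ Set.Icc (0:ℝ) 1) →
      (∑ i ∈ s, w i * (y i - c) = 0) →
      |∑ i ∈ s, w i * (f (y i) - f c)| ≤
        (∑ i ∈ s, w i * (1 + (y i - c) ^ 2 / (2 * h ^ 2))) * omega2 f h by
    exact fun s w y => H s.card s le_rfl w y
  intro n
  induction n with
  | zero =>
    intro s hcard w y _ _ _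
    have : s = ∅ := Finset.card_eq_zero.mp (Nat.le_zero.mp hcard)
    subst this
    simp
  | succ n ih =>
    intro s hcard w y hw hy hbal
    by_cases htriv : ∀ i ∈ s, w i * (y i - c) = 0
    · have hz : ∀ i ∈ s, w i * (f (y i) - f c) = 0 := by
        intro i hi
        rcases mul_eq_zero.mp (htriv i hi) with h0 | h0
        · rw [h0, zero_mul]
        · have : y i = c := by linarith
          rw [this, sub_self, mul_zero]
      rw [Finset.sum_eq_zero hz, abs_zero]
      apply mul_nonneg _ hω
      apply Finset.sum_nonneg
      intro i hi
      have := hw i hi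
      positivity
    · push_neg at htriv
      obtain ⟨i0, hi0s, hi0⟩ := htriv
      -- existence of an atom strictly below c and one strictly above c
      have hneg : ∃ i ∈ s, 0 < w i ∧ y i < c := by
        by_contra hcon
        push_neg at hcon
        have hterms : ∀ x ∈ s, 0 ≤ w x * (y x - c) := by
          intro x hxs
          rcases (hw x hxs).lt_or_eq with h0 | h0
          · have := hcon x hxs h0
            have : 0 ≤ y x - c := by linarith
            positivity
          · rw [← h0, zero_mul]
        exact hi0 ((Finset.sum_eq_zero_iff_of_nonneg hterms).mp hbal i0 hi0s)
      have hpos : ∃ j ∈ s, 0 < w j ∧ c < y j := by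
        by_contra hcon
        push_neg at hcon
        have hterms : ∀ x ∈ s, 0 ≤ -(w x * (y x - c)) := by
          intro x hxs
          rcases (hw x hxs).lt_or_eq with h0 | h0
          · have := hcon x hxs h0
            have h1 : 0 ≤ c - y x := by linarith
            have := mul_nonneg h0.le h1
            nlinarith
          · rw [← h0, zero_mul, neg_zero]
        have hbal' : ∑ i ∈ s, -(w i * (y i - c)) = 0 := by
          rw [Finset.sum_neg_distrib, hbal, neg_zero]
        have := (Finset.sum_eq_zero_iff_of_nonneg hterms).mp hbal' i0 hi0s
        exact hi0 (by linarith [neg_eq_zero.mp this])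
      obtain ⟨i, his, hwi, hyi⟩ := hneg
      obtain ⟨j, hjs, hwj, hyj⟩ := hpos
      have hij : i ≠ j := fun hh' => by rw [hh'] at hyi; linarith
      have hbc : (0:ℝ) < y j - c := by linarith
      have hca : (0:ℝ) < c - y i := by linarith
      have hyi01 := hy i his
      have hyj01 := hy j hjs
      rcases le_total (w i * (c - y i)) (w j * (y j - c)) with hle | hle
      · -- exhaust atom i
        set β := w i * (c - y i) / (y j - c) with hβdef
        have hβpos : 0 < β := by positivity
        have hβle : β ≤ w j := by
          rw [hβdef, div_le_iff₀ hbc]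
          linarith
        have hbal2 : w i * (c - y i) = β * (y j - c) := by
          rw [hβdef]; field_simp
        have hTP := two_point hf hC (α := w i) (β := β) (a := y i) (c := c) (b := y j)
          hh hwi.le hβpos.le hyi01.1 hyi.le hyj.le hyj01.2 hbal2
        set w' := Function.update w j (w j - β) with hw'def
        set s' := s.erase i with hs'def
        have hjs' : j ∈ s' := Finset.mem_erase.mpr ⟨fun hji => hij hji.symm, hjs⟩
        have hw' : ∀ x ∈ s', 0 ≤ w' x := by
          intro x hx
          by_cases hxj : x = j
          · subst hxj; rw [hw'def, Function.update_self]; linarith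
          · rw [hw'def, Function.update_of_ne hxj]
            exact hw x (Finset.mem_of_mem_erase hx)
        have hy' : ∀ x ∈ s', y x ∈ Set.Icc (0:ℝ) 1 :=
          fun x hx => hy x (Finset.mem_of_mem_erase hx)
        have hcard' : s'.card ≤ n := by
          rw [hs'def, Finset.card_erase_of_mem his]
          omega
        have hsur1 := sum_surgery s his hjs hij w (fun x => y x - c) β
        have hbal' : ∑ x ∈ s', w' x * (y x - c) = 0 := by
          rw [hbal] at hsur1
          rw [← hw'def] at hsur1
          nlinarith [hsur1]
        have hIH := ih s' hcard' w' y hw' hy' hbal'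
        have hsur2 := sum_surgery s his hjs hij w (fun x => f (y x) - f c) β
        have hsur3 := sum_surgery s his hjs hij w
          (fun x => 1 + (y x - c) ^ 2 / (2 * h ^ 2)) β
        rw [← hw'def] at hsur2 hsur3
        rw [hsur2, hsur3]
        calc |w i * (f (y i) - f c) + β * (f (y j) - f c) +
              ∑ x ∈ s', w' x * (f (y x) - f c)|
            ≤ |w i * (f (y i) - f c) + β * (f (y j) - f c)| +
              |∑ x ∈ s', w' x * (f (y x) - f c)| := abs_add_le _ _
          _ ≤ (w i * (1 + (y i - c) ^ 2 / (2 * h ^ 2)) +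
                β * (1 + (y j - c) ^ 2 / (2 * h ^ 2))) * omega2 f h +
              (∑ x ∈ s', w' x * (1 + (y x - c) ^ 2 / (2 * h ^ 2))) * omega2 f h := by
              exact add_le_add hTP hIH
          _ = _ := by ring
      · -- exhaust atom j
        set α := w j * (y j - c) / (c - y i) with hαdef
        have hαpos : 0 < α := by positivity
        have hαle : α ≤ w i := by
          rw [hαdef, div_le_iff₀ hca]
          linarith
        have hbal2 : α * (c - y i) = w j * (y j - c) := by
          rw [hαdef]; field_simp
        have hTP := two_point hf hC (α := α) (β := w j) (a := y i) (c := c) (b := y j)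
          hh hαpos.le hwj.le hyi01.1 hyi.le hyj.le hyj01.2 hbal2
        set w' := Function.update w i (w i - α) with hw'def
        set s' := s.erase j with hs'def
        have his' : i ∈ s' := Finset.mem_erase.mpr ⟨hij, his⟩
        have hw' : ∀ x ∈ s', 0 ≤ w' x := by
          intro x hx
          by_cases hxi : x = i
          · subst hxi; rw [hw'def, Function.update_self]; linarith
          · rw [hw'def, Function.update_of_ne hxi]
            exact hw x (Finset.mem_of_mem_erase hx)
        have hy' : ∀ x ∈ s', y x ∈ Set.Icc (0:ℝ) 1 :=
          fun x hx => hy x (Finset.mem_of_mem_erase hx)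
        have hcard' : s'.card ≤ n := by
          rw [hs'def, Finset.card_erase_of_mem hjs]
          omega
        have hsur1 := sum_surgery s hjs his hij.symm w (fun x => y x - c) α
        have hbal' : ∑ x ∈ s', w' x * (y x - c) = 0 := by
          rw [hbal] at hsur1
          rw [← hw'def] at hsur1
          nlinarith [hsur1]
        have hIH := ih s' hcard' w' y hw' hy' hbal'
        have hsur2 := sum_surgery s hjs his hij.symm w (fun x => f (y x) - f c) α
        have hsur3 := sum_surgery s hjs his hij.symm w
          (fun x => 1 + (y x - c) ^ 2 / (2 * h ^ 2)) α
        rw [← hw'def] at hsur2 hsur3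
        rw [hsur2, hsur3]
        calc |w j * (f (y j) - f c) + α * (f (y i) - f c) +
              ∑ x ∈ s', w' x * (f (y x) - f c)|
            ≤ |w j * (f (y j) - f c) + α * (f (y i) - f c)| +
              |∑ x ∈ s', w' x * (f (y x) - f c)| := abs_add_le _ _
          _ ≤ (α * (1 + (y i - c) ^ 2 / (2 * h ^ 2)) +
                w j * (1 + (y j - c) ^ 2 / (2 * h ^ 2))) * omega2 f h +
              (∑ x ∈ s', w' x * (1 + (y x - c) ^ 2 / (2 * h ^ 2))) * omega2 f h := by
              refine add_le_add ?_ hIH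
              rw [add_comm (w j * (f (y j) - f c))]
              exact hTP
          _ = _ := by ring

lemma bern_eval (n l : ℕ) (x : ℝ) : (bernsteinPolynomial ℝ n l).eval x = bern n l x := by
  simp [bernsteinPolynomial, bern]

lemma bern_nonneg {n l : ℕ} {x : ℝ} (hx : x ∈ Set.Icc (0:ℝ) 1) : 0 ≤ bern n l x := by
  have h1 : (0:ℝ) ≤ x := hx.1
  have h2 : (0:ℝ) ≤ 1 - x := by linarith [hx.2]
  unfold bern
  positivity

lemma bern_sum (n : ℕ) (x : ℝ) : ∑ l ∈ Finset.range (n + 1), bern n l x = 1 := by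
  have := congrArg (Polynomial.eval x) (bernsteinPolynomial.sum ℝ n)
  simpa [Polynomial.eval_finset_sum, bern_eval] using this

lemma bern_sum_mul (n : ℕ) (x : ℝ) :
    ∑ l ∈ Finset.range (n + 1), (l : ℝ) * bern n l x = n * x := by
  have := congrArg (Polynomial.eval x) (bernsteinPolynomial.sum_smul ℝ n)
  simpa [Polynomial.eval_finset_sum, bern_eval, nsmul_eq_mul] using this

lemma nat_mul_pred_cast (l : ℕ) : ((l * (l - 1) : ℕ) : ℝ) = (l : ℝ) ^ 2 - l := by
  cases l with
  | zero => simp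
  | succ p => push_cast [Nat.succ_sub_one]; ring

lemma bern_sum_sq (n : ℕ) (x : ℝ) :
    ∑ l ∈ Finset.range (n + 1), (l : ℝ) ^ 2 * bern n l x =
      (n : ℝ) * x + ((n : ℝ) ^ 2 - n) * x ^ 2 := by
  have h2 := congrArg (Polynomial.eval x) (bernsteinPolynomial.sum_mul_smul ℝ n)
  simp only [Polynomial.eval_finset_sum, Polynomial.eval_mul, Polynomial.eval_natCast,
    Polynomial.eval_pow, Polynomial.eval_X, nsmul_eq_mul] at h2
  have h2' : ∑ l ∈ Finset.range (n + 1), ((l:ℝ)^2 - l) * bern n l x = ((n:ℝ)^2 - n) * x^2 := by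
    rw [← nat_mul_pred_cast n]
    rw [← h2]
    apply Finset.sum_congr rfl
    intro l _
    rw [nat_mul_pred_cast, bern_eval]
  calc ∑ l ∈ Finset.range (n + 1), (l : ℝ) ^ 2 * bern n l x
      = ∑ l ∈ Finset.range (n + 1), (((l:ℝ)^2 - l) * bern n l x + (l:ℝ) * bern n l x) :=
        Finset.sum_congr rfl (fun l _ => by ring)
    _ = (∑ l ∈ Finset.range (n + 1), ((l:ℝ)^2 - l) * bern n l x)
        + ∑ l ∈ Finset.range (n + 1), (l:ℝ) * bern n l x := Finset.sum_add_distrib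
    _ = (n : ℝ) * x + ((n : ℝ) ^ 2 - n) * x ^ 2 := by rw [h2', bern_sum_mul]; ring


lemma bern_variance (n : ℕ) {M : ℝ} (hM : M ≠ 0) (x : ℝ) :
    ∑ l ∈ Finset.range (n + 1), bern n l x * ((l : ℝ) / M - n * x / M) ^ 2 =
      (n : ℝ) * x * (1 - x) / M ^ 2 := by
  have expand : ∀ l ∈ Finset.range (n + 1),
      bern n l x * ((l : ℝ) / M - n * x / M) ^ 2 =
        ((l : ℝ) ^ 2 * bern n l x) * (1 / M ^ 2)
          - ((l : ℝ) * bern n l x) * (2 * n * x / M ^ 2)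
          + bern n l x * ((n : ℝ) ^ 2 * x ^ 2 / M ^ 2) := by
    intro l _
    field_simp
    ring
  rw [Finset.sum_congr rfl expand]
  rw [Finset.sum_add_distrib, Finset.sum_sub_distrib, ← Finset.sum_mul, ← Finset.sum_mul,
    ← Finset.sum_mul, bern_sum, bern_sum_mul, bern_sum_sq]
  field_simp
  ring

lemma bern_at_zero (n l : ℕ) : bern n l 0 = if l = 0 then 1 else 0 := by
  cases l with
  | zero => simp [bern]
  | succ p => simp [bern]

lemma bern_at_one (n : ℕ) {l : ℕ} (hl : l ∈ Finset.range (n + 1)) :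
    bern n l 1 = if l = n then 1 else 0 := by
  rcases eq_or_lt_of_le (Nat.lt_succ_iff.mp (Finset.mem_range.mp hl)) with h | h
  · subst h; simp [bern]
  · rw [if_neg (Nat.ne_of_lt h), bern]
    rw [show n - l = (n - l - 1) + 1 by omega]
    simp

set_option maxHeartbeats 1000000 in
theorem kantorovich_pointwise_bound (k m : ℕ) (hkm : k < m)
    (μ : Measure ℝ) [IsProbabilityMeasure μ] (hμ : μ (Set.Icc (0:ℝ) k) = 1)
    (f : ℝ → ℝ) (hf : ContinuousOn f (Set.Icc 0 1))
    (x : ℝ) (hx : x ∈ Set.Icc (0:ℝ) 1) :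
    |Lop m k μ f x - f x| ≤
      2 * k * omega1 f (1 / m) + (3 / 2) * omega2 f (sigm x / Real.sqrt m) := by
  obtain ⟨C, hC0⟩ := isCompact_Icc.exists_bound_of_continuousOn hf
  have hC : ∀ u ∈ Set.Icc (0:ℝ) 1, |f u| ≤ C := by
    intro u hu; simpa [Real.norm_eq_abs] using hC0 u hu
  set n := m - k with hn
  have hx0 : (0:ℝ) ≤ x := hx.1
  have hx1 : x ≤ 1 := hx.2
  have hmpos : 0 < m := lt_of_le_of_lt (Nat.zero_le k) hkm
  have hm0 : (0:ℝ) < m := by exact_mod_cast hmpos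
  have hncast : (n:ℝ) = (m:ℝ) - (k:ℝ) := by rw [hn]; exact Nat.cast_sub hkm.le
  have hk0 : (0:ℝ) ≤ k := Nat.cast_nonneg k
  have hnle : (n:ℝ) ≤ m := by rw [hncast]; linarith
  have hn0 : (0:ℝ) ≤ n := Nat.cast_nonneg n
  have hδ0 : (0:ℝ) ≤ 1/(m:ℝ) := by positivity
  set ω1 := omega1 f (1/(m:ℝ)) with hω1def
  have hω1 : 0 ≤ ω1 := omega1_nonneg hC hδ0
  set δ2 := sigm x / Real.sqrt m with hδ2def
  have hδ2nn : 0 ≤ δ2 := div_nonneg (Real.sqrt_nonneg _) (Real.sqrt_nonneg _)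
  set ω2v := omega2 f δ2 with hω2def
  have hω2 : 0 ≤ ω2v := omega2_nonneg hC hδ2nn
  set c : ℝ := n * x / m with hcdef
  have hc01 : c ∈ Set.Icc (0:ℝ) 1 := by
    constructor
    · rw [hcdef]; positivity
    · rw [hcdef, div_le_one hm0]; nlinarith
  have hae : ∀ᵐ t ∂μ, t ∈ Set.Icc (0:ℝ) (k:ℝ) := by
    have hcompl : μ (Set.Icc (0:ℝ) (k:ℝ))ᶜ = 0 :=
      (prob_compl_eq_zero_iff measurableSet_Icc).mpr hμ
    rw [MeasureTheory.ae_iff]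
    exact hcompl
  have hclampmem : ∀ t : ℝ, min (max t 0) 1 ∈ Set.Icc (0:ℝ) 1 := by
    intro t
    exact ⟨le_min (le_max_right t 0) zero_le_one, min_le_right _ _⟩
  have hgc : Continuous (fun t : ℝ => f (min (max t 0) 1)) :=
    hf.comp_continuous (by continuity) hclampmem
  have hym : ∀ l ∈ Finset.range (n+1), ((l:ℝ)/m) ∈ Set.Icc (0:ℝ) 1 := by
    intro l hl
    have hl' : (l:ℝ) ≤ n := by exact_mod_cast Nat.lt_succ_iff.mp (Finset.mem_range.mp hl)
    constructor
    · positivity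
    · rw [div_le_one hm0]; linarith
  have hargmem : ∀ l ∈ Finset.range (n+1), ∀ t ∈ Set.Icc (0:ℝ) (k:ℝ),
      ((l:ℝ) + t)/m ∈ Set.Icc (0:ℝ) 1 := by
    intro l hl t ht
    have hl' : (l:ℝ) ≤ n := by exact_mod_cast Nat.lt_succ_iff.mp (Finset.mem_range.mp hl)
    have ht1 := ht.1
    have ht2 := ht.2
    constructor
    · positivity
    · rw [div_le_one hm0]; linarith
  have hint : ∀ l ∈ Finset.range (n+1), Integrable (fun t => f (((l:ℝ) + t)/m)) μ := by
    intro l hl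
    have hcl : Continuous (fun t : ℝ => ((l:ℝ) + t)/m) := by continuity
    have haes : AEStronglyMeasurable (fun t => f (((l:ℝ) + t)/m)) μ := by
      apply AEStronglyMeasurable.congr (hgc.comp hcl).aestronglyMeasurable
      filter_upwards [hae] with t ht
      have hmem := hargmem l hl t ht
      show f (min (max (((l:ℝ) + t)/m) 0) 1) = f (((l:ℝ) + t)/m)
      rw [max_eq_left hmem.1, min_eq_left hmem.2]
    apply Integrable.mono' (integrable_const C) haes
    filter_upwards [hae] with t ht
    rw [Real.norm_eq_abs]
    exact hC _ (hargmem l hl t ht)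
  have hT1l : ∀ l ∈ Finset.range (n+1),
      |(∫ t, f (((l:ℝ) + t)/m) ∂μ) - f ((l:ℝ)/m)| ≤ (k:ℝ) * ω1 := by
    intro l hl
    have heq : (∫ t, f (((l:ℝ) + t)/m) ∂μ) - f ((l:ℝ)/m)
        = ∫ t, (f (((l:ℝ) + t)/m) - f ((l:ℝ)/m)) ∂μ := by
      rw [integral_sub (hint l hl) (integrable_const _), integral_const]
      simp [measure_univ]
    rw [heq, ← Real.norm_eq_abs]
    have hb : ∀ᵐ t ∂μ, ‖f (((l:ℝ) + t)/m) - f ((l:ℝ)/m)‖ ≤ (k:ℝ) * ω1 := by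
      filter_upwards [hae] with t ht
      rw [Real.norm_eq_abs]
      apply omega1_chain hC hδ0 k _ _ (hargmem l hl t ht) (hym l hl)
      have he : ((l:ℝ) + t)/m - (l:ℝ)/m = t/m := by ring
      rw [he, abs_of_nonneg (div_nonneg ht.1 hm0.le)]
      rw [mul_one_div]
      gcongr
      exact ht.2
    calc ‖∫ t, (f (((l:ℝ) + t)/m) - f ((l:ℝ)/m)) ∂μ‖
        ≤ (k:ℝ) * ω1 * (μ Set.univ).toReal := norm_integral_le_of_norm_le_const hb
      _ = (k:ℝ) * ω1 := by simp [measure_univ]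
  have hT2 : |(∑ l ∈ Finset.range (n+1), bern n l x * f ((l:ℝ)/m)) - f c| ≤ (3/2) * ω2v := by
    rcases eq_or_lt_of_le hx0 with hx0' | hx0'
    · have hxz : x = 0 := hx0'.symm
      have hsum : ∑ l ∈ Finset.range (n+1), bern n l x * f ((l:ℝ)/m) = f 0 := by
        rw [Finset.sum_eq_single_of_mem 0 (Finset.mem_range.mpr (Nat.succ_pos n))
          (fun b _ hb => by rw [hxz, bern_at_zero, if_neg hb, zero_mul])]
        rw [hxz, bern_at_zero, if_pos rfl, one_mul]
        norm_num
      have hcz : c = 0 := by rw [hcdef, hxz]; ring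
      rw [hsum, hcz, sub_self, abs_zero]
      positivity
    rcases eq_or_lt_of_le hx1 with hx1' | hx1'
    · have hsum : ∑ l ∈ Finset.range (n+1), bern n l x * f ((l:ℝ)/m) = f ((n:ℝ)/m) := by
        rw [Finset.sum_eq_single_of_mem n (Finset.mem_range.mpr (Nat.lt_succ_self n))
          (fun b hbs hb => by rw [hx1', bern_at_one n hbs, if_neg hb, zero_mul])]
        rw [hx1', bern_at_one n (Finset.mem_range.mpr (Nat.lt_succ_self n)), if_pos rfl, one_mul]
      have hcz : c = (n:ℝ)/m := by rw [hcdef, hx1', mul_one]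
      rw [hsum, hcz, sub_self, abs_zero]
      positivity
    · have hx01 : 0 < x*(1-x) := by nlinarith
      have hsig : 0 < sigm x := Real.sqrt_pos.mpr hx01
      have hsm : 0 < Real.sqrt m := Real.sqrt_pos.mpr hm0
      have hh2 : 0 < δ2 := by rw [hδ2def]; exact div_pos hsig hsm
      have hδ2sq : δ2^2 = x*(1-x)/m := by
        rw [hδ2def, div_pow, sigm, Real.sq_sqrt hx01.le, Real.sq_sqrt hm0.le]
      have hbal : ∑ l ∈ Finset.range (n+1), bern n l x * ((l:ℝ)/m - c) = 0 := by
        have hsp : ∀ l ∈ Finset.range (n+1), bern n l x * ((l:ℝ)/m - c) =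
            ((l:ℝ) * bern n l x) * (1/(m:ℝ)) - bern n l x * c := fun l _ => by ring
        rw [Finset.sum_congr rfl hsp, Finset.sum_sub_distrib, ← Finset.sum_mul, ← Finset.sum_mul,
          bern_sum_mul, bern_sum, hcdef]
        field_simp
        ring
      have hdisc := disc hf hC hh2 hc01 (Finset.range (n+1)) (fun l => bern n l x)
        (fun l => (l:ℝ)/m) (fun i _ => bern_nonneg hx) hym hbal
      have hcoef : ∑ l ∈ Finset.range (n+1), bern n l x * (1 + ((l:ℝ)/m - c)^2/(2*δ2^2))
          ≤ 3/2 := by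
        have hsplit : ∀ l ∈ Finset.range (n+1),
            bern n l x * (1 + ((l:ℝ)/m - c)^2/(2*δ2^2)) =
            bern n l x + (bern n l x * ((l:ℝ)/m - (n:ℝ)*x/m)^2) * (1/(2*δ2^2)) := by
          intro l _; rw [hcdef]; ring
        rw [Finset.sum_congr rfl hsplit, Finset.sum_add_distrib, ← Finset.sum_mul, bern_sum,
          bern_variance n hm0.ne' x, hδ2sq]
        have he2 : (n:ℝ)*x*(1-x)/(m:ℝ)^2 * (1/(2*(x*(1-x)/m))) = n/(2*m) := by
          field_simp
        rw [he2]
        have he3 : (n:ℝ)/(2*m) ≤ 1/2 := by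
          rw [div_le_div_iff₀ (by positivity) (by norm_num)]
          linarith
        linarith
      have hfold : ∑ l ∈ Finset.range (n+1), bern n l x * (f ((l:ℝ)/m) - f c)
          = (∑ l ∈ Finset.range (n+1), bern n l x * f ((l:ℝ)/m)) - f c := by
        rw [Finset.sum_congr rfl (fun l _ => mul_sub (bern n l x) (f ((l:ℝ)/m)) (f c)),
          Finset.sum_sub_distrib, ← Finset.sum_mul, bern_sum, one_mul]
      calc |(∑ l ∈ Finset.range (n+1), bern n l x * f ((l:ℝ)/m)) - f c|
          = |∑ l ∈ Finset.range (n+1), bern n l x * (f ((l:ℝ)/m) - f c)| := by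
            rw [hfold]
          _ ≤ (∑ l ∈ Finset.range (n+1), bern n l x * (1 + ((l:ℝ)/m - c)^2/(2*δ2^2))) * ω2v :=
            hdisc
          _ ≤ (3/2) * ω2v := mul_le_mul_of_nonneg_right hcoef hω2
  have hT3 : |f c - f x| ≤ (k:ℝ) * ω1 := by
    apply omega1_chain hC hδ0 k c x hc01 hx
    have h1 : c - x = -((k:ℝ)*x) * (1/m) := by
      rw [hcdef]
      field_simp
      linear_combination x * hncast
    rw [h1, abs_mul, abs_neg, abs_of_nonneg (by positivity : (0:ℝ) ≤ (k:ℝ)*x),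
      abs_of_nonneg hδ0]
    apply mul_le_mul_of_nonneg_right _ hδ0
    nlinarith
  have hsplit : Lop m k μ f x - f x =
      (∑ l ∈ Finset.range (n+1), bern n l x *
        ((∫ t, f (((l:ℝ) + t)/m) ∂μ) - f ((l:ℝ)/m)))
      + ((∑ l ∈ Finset.range (n+1), bern n l x * f ((l:ℝ)/m)) - f c)
      + (f c - f x) := by
    have e1 : ∑ l ∈ Finset.range (n+1), bern n l x *
        ((∫ t, f (((l:ℝ) + t)/m) ∂μ) - f ((l:ℝ)/m)) =
        (∑ l ∈ Finset.range (n+1), bern n l x * ∫ t, f (((l:ℝ) + t)/m) ∂μ)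
          - ∑ l ∈ Finset.range (n+1), bern n l x * f ((l:ℝ)/m) := by
      rw [← Finset.sum_sub_distrib]
      exact Finset.sum_congr rfl fun l _ => mul_sub _ _ _
    rw [show Lop m k μ f x = ∑ l ∈ Finset.range (n+1), bern n l x *
        ∫ t, f (((l:ℝ) + t)/m) ∂μ from by rw [Lop, ← hn]]
    rw [e1]
    ring
  have hT1 : |∑ l ∈ Finset.range (n+1), bern n l x *
      ((∫ t, f (((l:ℝ) + t)/m) ∂μ) - f ((l:ℝ)/m))| ≤ (k:ℝ) * ω1 := by
    calc |∑ l ∈ Finset.range (n+1), bern n l x *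
        ((∫ t, f (((l:ℝ) + t)/m) ∂μ) - f ((l:ℝ)/m))|
        ≤ ∑ l ∈ Finset.range (n+1), |bern n l x *
          ((∫ t, f (((l:ℝ) + t)/m) ∂μ) - f ((l:ℝ)/m))| := Finset.abs_sum_le_sum_abs _ _
      _ ≤ ∑ l ∈ Finset.range (n+1), bern n l x * ((k:ℝ)*ω1) := by
          apply Finset.sum_le_sum
          intro l hl
          rw [abs_mul, abs_of_nonneg (bern_nonneg hx)]
          exact mul_le_mul_of_nonneg_left (hT1l l hl) (bern_nonneg hx)
      _ = (k:ℝ) * ω1 := by rw [← Finset.sum_mul, bern_sum, one_mul]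
  rw [hsplit]
  calc |_ + _ + (f c - f x)| ≤ |_ + _| + |f c - f x| := abs_add_le _ _
    _ ≤ (|_| + |_|) + |f c - f x| := by gcongr; exact abs_add_le _ _
    _ ≤ ((k:ℝ)*ω1 + (3/2)*ω2v) + (k:ℝ)*ω1 := add_le_add (add_le_add hT1 hT2) hT3
    _ = 2*(k:ℝ)*ω1 + (3/2)*ω2v := by ring
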